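/- Let h and m be positive integers with gcd(h, m) = 1 and q = 2^m. For any a, b, c ∈ F_q, not all zero, the number of roots of g(x) = a x^{2^h+1} + b x^{2^h} + c among the nonzero elements of F_q is 0, 1, or 3. -/

import Mathlib

private lemma two_pow_modeq (a : ℕ) : (2:ℕ)^a ≡ 1 [MOD 2^a - 1] := by
  have h1 : 1 ≤ (2:ℕ)^a := Nat.one_le_two_pow
  exact ((Nat.modEq_iff_dvd' h1).2 dvd_rfl).symm

private lemma gcd_two_pow_sub_one (a : ℕ) : ∀ b, Nat.gcd (2^a - 1) (2^b - 1) = 2^(Nat.gcd a b) - 1 := by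
  induction a using Nat.strong_induction_on with
  | _ a ih =>
    intro b
    rcases Nat.eq_zero_or_pos a with rfl | ha
    · simp
    · have hr : b % a < a := Nat.mod_lt _ ha
      have hmod : ((2:ℕ)^b - 1) % (2^a - 1) = 2^(b % a) - 1 := by
        have h1 : (2:ℕ)^b ≡ 2^(b % a) [MOD 2^a - 1] := by
          conv_lhs => rw [← Nat.div_add_mod b a]
          rw [pow_add, pow_mul]
          calc ((2:ℕ)^a)^(b/a) * 2^(b%a) ≡ 1^(b/a) * 2^(b%a) [MOD 2^a-1] :=
                ((two_pow_modeq a).pow _).mul_right _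
            _ = 2^(b%a) := by ring
        have e1 : 1 ≤ (2:ℕ)^b := Nat.one_le_two_pow
        have e2 : 1 ≤ (2:ℕ)^(b%a) := Nat.one_le_two_pow
        have h2 : (2:ℕ)^b - 1 ≡ 2^(b%a) - 1 [MOD 2^a - 1] := by
          apply Nat.ModEq.add_right_cancel' 1
          simpa [Nat.sub_add_cancel e1, Nat.sub_add_cancel e2] using h1
        have hlt : (2:ℕ)^(b%a) - 1 < 2^a - 1 := by
          have := Nat.pow_lt_pow_right (by norm_num : 1 < 2) hr
          omega
        calc ((2:ℕ)^b-1) % (2^a-1) = ((2:ℕ)^(b%a)-1) % (2^a-1) := h2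
          _ = 2^(b%a)-1 := Nat.mod_eq_of_lt hlt
      rw [Nat.gcd_rec (2^a-1), hmod, ih _ hr a, ← Nat.gcd_rec]

private lemma char_two (F : Type*) [Field F] [Fintype F] (m : ℕ) (hm : 0 < m)
    (hF : Fintype.card F = 2^m) : CharP F 2 := by
  haveI := ringChar.charP F
  obtain ⟨n, hp, hc⟩ := FiniteField.card F (ringChar F)
  have h2 : ringChar F = 2 := by
    have hd : ringChar F ∣ 2^m := by
      rw [← hF, hc]; exact dvd_pow_self _ (by exact_mod_cast n.pos.ne')
    have := (Nat.Prime.dvd_of_dvd_pow hp hd)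
    exact (Nat.prime_dvd_prime_iff_eq hp Nat.prime_two).1 this
  rw [← h2]; infer_instance

private lemma key {F : Type*} [Field F] [Fintype F] {m h : ℕ} (hm : 0 < m) (hh : 0 < h)
    (hgcd : Nat.gcd h m = 1) (hF : Fintype.card F = 2^m)
    (α γ : F) (hγ : γ ≠ 0) :
    ({z : F | z ^ (2^h + 1) + α * z + γ = 0}).ncard = 0 ∨
    ({z : F | z ^ (2^h + 1) + α * z + γ = 0}).ncard = 1 ∨
    ({z : F | z ^ (2^h + 1) + α * z + γ = 0}).ncard = 3 := by
  haveI : CharP F 2 := char_two F m hm hF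
  haveI : Fact (Nat.Prime 2) := ⟨Nat.prime_two⟩
  haveI := Classical.decEq F
  set Q := 2^h with hQdef
  have hQ1 : 1 ≤ Q := Nat.one_le_two_pow
  have htwo : (2 : F) = 0 := by exact_mod_cast CharP.cast_eq_zero F 2
  have frob : ∀ u v : F, (u + v)^Q = u^Q + v^Q := fun u v => add_pow_char_pow u v 2 h
  set S := {z : F | z ^ (Q + 1) + α * z + γ = 0} with hSdef
  -- injectivity of (Q-1) power on nonzero elements
  have hone : ∀ w : F, w ≠ 0 → w^(Q-1) = 1 → w = 1 := by
    intro w hw hw1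
    have hu : (Units.mk0 w hw) ^ (Q-1) = 1 := by
      apply Units.ext
      rw [Units.val_pow_eq_pow_val]
      simpa using hw1
    have hcard : (Units.mk0 w hw) ^ (2^m - 1) = 1 := by
      rw [← hF, ← Fintype.card_units]; exact pow_card_eq_one
    have h2 := pow_gcd_eq_one.2 ⟨hu, hcard⟩
    rw [gcd_two_pow_sub_one, hgcd] at h2
    exact congrArg Units.val (by simpa using h2)
  have hpowinj : ∀ t t' : F, t ≠ 0 → t' ≠ 0 → t^(Q-1) = t'^(Q-1) → t = t' := by
    intro t t' ht ht' hE
    have h1 : (t/t') ≠ 0 := div_ne_zero ht ht'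
    have h2 : (t/t')^(Q-1) = 1 := by
      rw [div_pow, hE, div_self (pow_ne_zero _ ht')]
    have h3 := hone _ h1 h2
    field_simp at h3; exact h3
  have hQsplit : ∀ w : F, w^Q = w^(Q-1) * w := by
    intro w; rw [← pow_succ, Nat.sub_add_cancel hQ1]
  have hQ0 : Q ≠ 0 := by omega
  -- basic facts about roots
  have hroot0 : ∀ z ∈ S, z ≠ 0 := by
    intro z hz h0
    rw [hSdef, Set.mem_setOf_eq, h0] at hz
    simp at hz
    exact hγ hz
  by_cases hex : ∃ x ∈ S, ∃ y ∈ S, x ≠ y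
  · right; right
    obtain ⟨x, hxS, y, hyS, hxy⟩ := hex
    have hx : x^(Q+1) + α*x + γ = 0 := hxS
    have hy : y^(Q+1) + α*y + γ = 0 := hyS
    have hx0 : x ≠ 0 := hroot0 x hxS
    have hA0 : x^Q + α ≠ 0 := by
      intro hA
      exact hγ (by linear_combination hx - x * hA)
    -- kernel element t0
    obtain ⟨u0, hu0⟩ := Finite.injective_iff_surjective.mp
      (fun (u v : Fˣ) (huv : (fun u : Fˣ => u ^ (Q-1)) u = (fun u : Fˣ => u ^ (Q-1)) v) => by
        have := hpowinj (u:F) (v:F) (Units.ne_zero u) (Units.ne_zero v)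
          (by simpa using congrArg Units.val huv)
        exact Units.ext this)
      (Units.mk0 (x / (x^Q + α)) (div_ne_zero hx0 hA0))
    set t0 : F := (u0 : F) with ht0def
    have ht0ne : t0 ≠ 0 := Units.ne_zero u0
    have ht0c : t0^(Q-1) = x / (x^Q + α) := by
      have := congrArg Units.val hu0
      push_cast at this; simpa using this
    have htp : t0^(Q-1) * (x^Q + α) = x := by
      rw [ht0c]; field_simp
    have hL0 : (x^Q + α) * t0^Q + x * t0 = 0 := by
      rw [hQsplit t0]
      linear_combination t0 * htp + (x*t0) * htwo
    -- kernel uniqueness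
    have hker : ∀ t : F, t ≠ 0 → (x^Q + α) * t^Q + x * t = 0 → t = t0 := by
      intro t ht hL
      apply hpowinj t t0 ht ht0ne
      have h1 : (x^Q+α) * t^Q * t0 = (x^Q+α) * t0^Q * t := by
        linear_combination t0 * hL - t * hL0
      rw [hQsplit t, hQsplit t0] at h1
      have h2 : (x^Q+α) * (t^(Q-1) * (t * t0)) = (x^Q+α) * (t0^(Q-1) * (t * t0)) := by
        linear_combination h1
      have h3 := mul_left_cancel₀ hA0 h2
      exact mul_right_cancel₀ (mul_ne_zero ht ht0ne) h3
    -- forward: every other root gives a solution of the affine equation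
    have hfwd : ∀ z, z ∈ S → z ≠ x → (x^Q+α) * ((z + x)⁻¹)^Q + x * (z + x)⁻¹ = 1 := by
      intro z hzS hzx
      have hz : z^(Q+1) + α*z + γ = 0 := hzS
      set s : F := z + x with hsdef
      have hs0 : s ≠ 0 := by
        intro h0
        apply hzx
        have h5 : z = -x := eq_neg_of_add_eq_zero_left h0
        rwa [CharTwo.neg_eq] at h5
      have hzs : z = x + s := by rw [hsdef]; linear_combination (-x) * htwo
      have hz3 : (x+s)^(Q+1) + α*(x+s) + γ = 0 := by rw [← hzs]; exact hz
      have hz2 : (x^Q + s^Q) * (x + s) + α*(x+s) + γ = 0 := by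
        rw [← frob, ← pow_succ]; exact hz3
      have hR : (x^Q+α)*s + x*s^Q = s^Q*s := by
        linear_combination hz2 - hx - (s^Q*s)*htwo
      have hE3 : s * s⁻¹ = 1 := mul_inv_cancel₀ hs0
      have hE4 : s^Q * (s⁻¹)^Q = 1 := by rw [← mul_pow, hE3, one_pow]
      linear_combination ((s⁻¹)^Q*s⁻¹)*hR + (1 - (x^Q+α)*(s⁻¹)^Q)*hE3 + (s*s⁻¹ - x*s⁻¹)*hE4
    -- backward: solutions of the affine equation give roots
    have hback : ∀ t : F, (x^Q+α) * t^Q + x * t = 1 → (x + t⁻¹) ∈ S := by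
      intro t hLt
      have ht : t ≠ 0 := by
        intro h0
        rw [h0] at hLt
        simp [zero_pow hQ0] at hLt
      have hE3 : t * t⁻¹ = 1 := mul_inv_cancel₀ ht
      have hE4 : t^Q * (t⁻¹)^Q = 1 := by rw [← mul_pow, hE3, one_pow]
      show (x + t⁻¹)^(Q+1) + α*(x + t⁻¹) + γ = 0
      rw [pow_succ, frob]
      linear_combination hx + ((t⁻¹)^Q*t⁻¹)*hLt - ((x^Q+α)*t⁻¹)*hE4 - (x*(t⁻¹)^Q)*hE3
        + ((t⁻¹)^Q*t⁻¹)*htwo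
    set t1 : F := (y + x)⁻¹ with ht1def
    have hL1 : (x^Q+α) * t1^Q + x * t1 = 1 := hfwd y hyS (Ne.symm hxy)
    set t2 : F := t1 + t0 with ht2def
    have hLt2 : (x^Q+α) * t2^Q + x * t2 = 1 := by
      have hf2 : t2^Q = t1^Q + t0^Q := frob t1 t0
      linear_combination hL1 + hL0 + (x^Q+α)*hf2 + x*ht2def
    have ht2 : t2 ≠ 0 := by
      intro h0
      rw [h0] at hLt2
      simp [zero_pow hQ0] at hLt2
    have hx3S : (x + t2⁻¹) ∈ S := hback t2 hLt2
    have hx_ne_x3 : x ≠ x + t2⁻¹ := by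
      intro hEq
      exact ht2 (inv_eq_zero.mp (left_eq_add.mp hEq))
    have hy_ne_x3 : y ≠ x + t2⁻¹ := by
      intro hEq
      have h1 : y + x = t2⁻¹ := by rw [hEq]; linear_combination x*htwo
      have h2 : t1 = t2 := by rw [ht1def, h1, inv_inv]
      have h3 : t0 = 0 := by linear_combination -ht2def - h2
      exact ht0ne h3
    have hcomplete : ∀ z, z ∈ S → z = x ∨ z = y ∨ z = x + t2⁻¹ := by
      intro z hzS
      by_cases hzx : z = x
      · exact Or.inl hzx
      have hLz := hfwd z hzS hzx
      set tz : F := (z+x)⁻¹ with htzdef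
      have hsz : z + x ≠ 0 := by
        intro h0
        apply hzx
        have h5 : z = -x := eq_neg_of_add_eq_zero_left h0
        rwa [CharTwo.neg_eq] at h5
      have hsum : (x^Q+α)*(tz+t1)^Q + x*(tz+t1) = 0 := by
        have hf3 : (tz+t1)^Q = tz^Q + t1^Q := frob tz t1
        linear_combination hLz + hL1 + (x^Q+α)*hf3 + htwo
      by_cases h0 : tz + t1 = 0
      · right; left
        have h5 : tz = t1 := by linear_combination h0 - t1*htwo
        have h6 : z + x = y + x := by
          have := inv_injective (h5 : (z+x)⁻¹ = (y+x)⁻¹)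
          exact this
        exact add_right_cancel h6
      · right; right
        have h5 : tz = t2 := by
          have := hker _ h0 hsum
          linear_combination this - ht2def - t1*htwo
        have h6 : z + x = t2⁻¹ := by
          rw [← h5, htzdef, inv_inv]
        linear_combination h6 - x*htwo
    have hSeq : S = {x, y, x + t2⁻¹} := by
      ext z
      simp only [Set.mem_insert_iff, Set.mem_singleton_iff]
      constructor
      · exact hcomplete z
      · rintro (rfl | rfl | rfl)
        · exact hxS
        · exact hyS
        · exact hx3S
    rw [Set.ncard_eq_three]
    exact ⟨x, y, x + t2⁻¹, hxy, hx_ne_x3, hy_ne_x3, hSeq⟩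
  · have hsub : S.Subsingleton := by
      intro a ha b hb
      by_contra hne
      exact hex ⟨a, ha, b, hb, hne⟩
    rcases hsub.eq_empty_or_singleton with hemp | ⟨a0, hsing⟩
    · left; rw [hemp]; exact Set.ncard_empty F
    · right; left; rw [hsing]; exact Set.ncard_singleton a0

theorem stmt9 (m h : ℕ) (hm : 0 < m) (hh : 0 < h) (hgcd : Nat.gcd h m = 1)
    (F : Type*) [Field F] [Fintype F] (hF : Fintype.card F = 2 ^ m)
    (a b c : F) (habc : ¬(a = 0 ∧ b = 0 ∧ c = 0))
    (N : ℕ)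
    (hN : N = {x : F | x ≠ 0 ∧ a * x ^ (2 ^ h + 1) + b * x ^ 2 ^ h + c = 0}.ncard) :
    N = 0 ∨ N = 1 ∨ N = 3 := by
  subst hN
  haveI : CharP F 2 := char_two F m hm hF
  haveI : Fact (Nat.Prime 2) := ⟨Nat.prime_two⟩
  set Q := 2^h with hQdef
  have hQ0 : Q ≠ 0 := by positivity
  set S := {x : F | x ≠ 0 ∧ a * x ^ (Q + 1) + b * x ^ Q + c = 0} with hSdef
  have hsub_case : S.Subsingleton → S.ncard = 0 ∨ S.ncard = 1 ∨ S.ncard = 3 := by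
    intro hsub
    rcases hsub.eq_empty_or_singleton with hemp | ⟨a0, hsing⟩
    · left; rw [hemp]; exact Set.ncard_empty F
    · right; left; rw [hsing]; exact Set.ncard_singleton a0
  by_cases ha : a = 0
  · subst ha
    by_cases hb : b = 0
    · subst hb
      have hc : c ≠ 0 := by tauto
      apply hsub_case
      intro u hu v hv
      exact absurd (by linear_combination hu.2 : c = 0) hc
    · apply hsub_case
      intro u hu v hv
      obtain ⟨hu0, hue⟩ := hu
      obtain ⟨hv0, hve⟩ := hv
      have h1 : u^Q = v^Q := mul_left_cancel₀ hb (by linear_combination hue - hve)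
      have h2 : (u - v)^Q = 0 := by
        rw [hQdef, sub_pow_char_pow, ← hQdef, h1, sub_self]
      exact sub_eq_zero.mp ((pow_eq_zero_iff hQ0).mp h2)
  · by_cases hc : c = 0
    · subst hc
      apply hsub_case
      intro u hu v hv
      obtain ⟨hu0, hue⟩ := hu
      obtain ⟨hv0, hve⟩ := hv
      have h1 : u^Q * (a*u + b) = 0 := by linear_combination hue
      have h2 : v^Q * (a*v + b) = 0 := by linear_combination hve
      have h3 : a*u + b = 0 := by
        rcases mul_eq_zero.mp h1 with h | h
        · exact absurd h (pow_ne_zero _ hu0)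
        · exact h
      have h4 : a*v + b = 0 := by
        rcases mul_eq_zero.mp h2 with h | h
        · exact absurd h (pow_ne_zero _ hv0)
        · exact h
      have := mul_left_cancel₀ ha (by linear_combination h3 - h4 : a*u = a*v)
      exact this
    · have him : (fun x : F => x⁻¹) '' S = {z : F | z ^ (Q + 1) + (b/c) * z + (a/c) = 0} := by
        ext z
        constructor
        · rintro ⟨x, ⟨hx0, hxe⟩, rfl⟩
          show (x⁻¹)^(Q+1) + (b/c)*x⁻¹ + a/c = 0
          have hxQ : x^(Q+1) ≠ 0 := pow_ne_zero _ hx0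
          rw [inv_pow]
          field_simp
          linear_combination x*hxe
        · intro hz
          have hz' : z ^ (Q + 1) + (b/c) * z + (a/c) = 0 := hz
          have hz0 : z ≠ 0 := by
            intro h0
            rw [h0] at hz'
            simp [zero_pow] at hz'
            rcases hz' with h | h
            · exact ha h
            · exact hc h
          refine ⟨z⁻¹, ⟨inv_ne_zero hz0, ?_⟩, by simp⟩
          have hzQ : z^(Q+1) ≠ 0 := pow_ne_zero _ hz0
          rw [inv_pow, inv_pow]
          field_simp at hz' ⊢
          linear_combination z^Q * hz'
      rw [← Set.ncard_image_of_injective S inv_injective, him]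
      exact key hm hh hgcd hF (b/c) (a/c) (div_ne_zero ha hc)
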